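/- Let W_λ denote the irreducible representation of the symmetric group S_{mi} associated to a partition λ of mi, H ⊂ S_{mi} the wreath-product subgroup S_m^{×i} ⋊ S_i (acting on {1,...,mi} partitioned into i consecutive blocks of size m). For λ = mδ_i (the rectangular partition with i parts all equal to m), the space of H-invariants [W_{mδ_i}]^H is one-dimensional. -/

import Mathlib

open Finset

/-- The element of the column group of the rectangular tableau `B_o` (rows indexed by
`Fin i`, columns by `Fin m`, so the cells/letters permuted by `S_{mi}` are indexed by
`Fin i × Fin m`) determined by `μ : Fin m → S_i`: the permutation `(a,b) ↦ (μ_b a, b)`. -/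
def colPerm {i m : ℕ} (μ : Fin m → Equiv.Perm (Fin i)) : Equiv.Perm (Fin i × Fin m) :=
  ((Equiv.prodComm (Fin i) (Fin m)).trans
    (Equiv.prodShear (Equiv.refl (Fin m)) μ)).trans (Equiv.prodComm (Fin m) (Fin i))

/-- The element of the row group of `B_o` determined by `ρ : Fin i → S_m`:
`(a,b) ↦ (a, ρ_a b)`. -/
def rowPerm {i m : ℕ} (ρ : Fin i → Equiv.Perm (Fin m)) : Equiv.Perm (Fin i × Fin m) :=
  Equiv.prodShear (Equiv.refl (Fin i)) ρ

/-- The Young symmetrizer `S(B_o) = (∑_{μ ∈ Col} sgn(μ)·μ)·(∑_{ρ ∈ Row} ρ)` of the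
rectangular tableau of shape `(m^i)`, as an element of the group algebra `ℂ[S_{mi}]`. -/
noncomputable def youngSym (i m : ℕ) : MonoidAlgebra ℂ (Equiv.Perm (Fin i × Fin m)) :=
  ∑ μ : Fin m → Equiv.Perm (Fin i), ∑ ρ : Fin i → Equiv.Perm (Fin m),
    ((((∏ b, Equiv.Perm.sign (μ b) : ℤˣ) : ℤ)) : ℂ) •
      MonoidAlgebra.of ℂ (Equiv.Perm (Fin i × Fin m)) (colPerm μ * rowPerm ρ)

/-- The left ideal `ℂ[S_{mi}]·S(B_o)`: a realization of the irreducible `S_{mi}`-module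
`W_{mδ_i}` associated to the rectangular partition `mδ_i = (m,...,m)` (`i` parts). -/
noncomputable def rectSpecht (i m : ℕ) :
    Submodule ℂ (MonoidAlgebra ℂ (Equiv.Perm (Fin i × Fin m))) :=
  Submodule.span ℂ
    {x | ∃ g : Equiv.Perm (Fin i × Fin m),
      x = MonoidAlgebra.of ℂ (Equiv.Perm (Fin i × Fin m)) g * youngSym i m}

/-- `H = S_m^{×i} ⋊ S_i ⊂ S_{mi}`, the letters `Fin i × Fin m` being partitioned into `i`
blocks of size `m`: the permutations `(a,b) ↦ (π a, ρ_a b)`. -/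
def InWreath {i m : ℕ} (h : Equiv.Perm (Fin i × Fin m)) : Prop :=
  ∃ (π : Equiv.Perm (Fin i)) (ρ : Fin i → Equiv.Perm (Fin m)),
    ∀ ab : Fin i × Fin m, h ab = (π ab.1, ρ ab.1 ab.2)

section Aux

variable {i m : ℕ}

@[simp] lemma colPerm_apply (μ : Fin m → Equiv.Perm (Fin i)) (ab : Fin i × Fin m) :
    colPerm μ ab = (μ ab.2 ab.1, ab.2) := rfl

@[simp] lemma rowPerm_apply (ρ : Fin i → Equiv.Perm (Fin m)) (ab : Fin i × Fin m) :
    rowPerm ρ ab = (ab.1, ρ ab.1 ab.2) := rfl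

lemma colPerm_mul (μ ν : Fin m → Equiv.Perm (Fin i)) :
    colPerm (μ * ν) = colPerm μ * colPerm ν := by
  ext ab <;> simp [Equiv.Perm.mul_apply]

/-- The wreath product subgroup. -/
def wreathGrp (i m : ℕ) : Subgroup (Equiv.Perm (Fin i × Fin m)) where
  carrier := {h | InWreath h}
  one_mem' := ⟨1, fun _ => 1, fun _ => rfl⟩
  mul_mem' := by
    rintro h h' ⟨π, ρ, hh⟩ ⟨π', ρ', hh'⟩
    refine ⟨π * π', fun a => ρ (π' a) * ρ' a, fun ab => ?_⟩
    rw [Equiv.Perm.mul_apply, hh', hh]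
    rfl
  inv_mem' := by
    rintro h ⟨π, ρ, hh⟩
    refine ⟨π⁻¹, fun a => (ρ (π⁻¹ a))⁻¹, fun ab => ?_⟩
    rw [Equiv.Perm.inv_eq_iff_eq, hh]
    simp

lemma mem_wreathGrp {h : Equiv.Perm (Fin i × Fin m)} :
    h ∈ wreathGrp i m ↔ InWreath h := Iff.rfl

noncomputable instance : Fintype (wreathGrp i m) := Fintype.ofFinite _

/-- the sum over the wreath subgroup in the group algebra -/
noncomputable def eH (i m : ℕ) : MonoidAlgebra ℂ (Equiv.Perm (Fin i × Fin m)) :=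
  ∑ h : wreathGrp i m, MonoidAlgebra.of ℂ (Equiv.Perm (Fin i × Fin m)) (h : Equiv.Perm (Fin i × Fin m))

lemma of_mul_eH {h : Equiv.Perm (Fin i × Fin m)} (hh : InWreath h) :
    MonoidAlgebra.of ℂ (Equiv.Perm (Fin i × Fin m)) h * eH i m = eH i m := by
  rw [eH, Finset.mul_sum]
  refine Fintype.sum_equiv (Equiv.mulLeft (⟨h, hh⟩ : wreathGrp i m)) _ _ fun h' => ?_
  rw [← map_mul]
  rfl

lemma eH_mul_of {h : Equiv.Perm (Fin i × Fin m)} (hh : InWreath h) :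
    eH i m * MonoidAlgebra.of ℂ (Equiv.Perm (Fin i × Fin m)) h = eH i m := by
  rw [eH, Finset.sum_mul]
  refine Fintype.sum_equiv (Equiv.mulRight (⟨h, hh⟩ : wreathGrp i m)) _ _ fun h' => ?_
  rw [← map_mul]
  rfl

end Aux

section Sgn

variable {i m : ℕ}

/-- the sign coefficient appearing in `youngSym` -/
noncomputable def sgnC (μ : Fin m → Equiv.Perm (Fin i)) : ℂ :=
  ((((∏ b, Equiv.Perm.sign (μ b) : ℤˣ) : ℤ)) : ℂ)

lemma youngSym_eq :
    youngSym i m = ∑ μ : Fin m → Equiv.Perm (Fin i), ∑ ρ : Fin i → Equiv.Perm (Fin m),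
      sgnC μ • MonoidAlgebra.of ℂ (Equiv.Perm (Fin i × Fin m)) (colPerm μ * rowPerm ρ) := rfl

lemma sgnC_mul (μ ν : Fin m → Equiv.Perm (Fin i)) : sgnC (μ * ν) = sgnC μ * sgnC ν := by
  unfold sgnC
  rw [← Int.cast_mul, ← Units.val_mul, ← Finset.prod_mul_distrib]
  norm_num [Pi.mul_apply]

lemma sgnC_sq (μ : Fin m → Equiv.Perm (Fin i)) : sgnC μ * sgnC μ = 1 := by
  unfold sgnC
  rcases Int.units_eq_one_or (∏ b, Equiv.Perm.sign (μ b)) with h | h <;> rw [h] <;> norm_num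

lemma sgnC_self_mul (μ ν : Fin m → Equiv.Perm (Fin i)) : sgnC μ * sgnC (μ * ν) = sgnC ν := by
  rw [sgnC_mul, ← mul_assoc, sgnC_sq, one_mul]

/-- left multiplication by a column-group element on the Young symmetrizer -/
lemma colPerm_mul_youngSym (ν : Fin m → Equiv.Perm (Fin i)) :
    MonoidAlgebra.of ℂ (Equiv.Perm (Fin i × Fin m)) (colPerm ν) * youngSym i m
      = sgnC ν • youngSym i m := by
  rw [youngSym_eq, Finset.mul_sum, Finset.smul_sum]
  refine Fintype.sum_equiv (Equiv.mulLeft ν) _ _ fun μ => ?_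
  rw [Finset.mul_sum, Finset.smul_sum]
  refine Finset.sum_congr rfl fun ρ _ => ?_
  rw [mul_smul_comm, ← map_mul, ← mul_assoc, ← colPerm_mul, smul_smul]
  rw [show Equiv.mulLeft ν μ = ν * μ from rfl, sgnC_self_mul]

end Sgn

section Swap

variable {i m : ℕ}

/-- the column-group element which is the transposition of `(a,b)` and `(a',b)` -/
noncomputable def swapCol (a a' : Fin i) (b : Fin m) : Fin m → Equiv.Perm (Fin i) :=
  fun b' => if b' = b then Equiv.swap a a' else 1

lemma colPerm_swapCol (a a' : Fin i) (b : Fin m) :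
    colPerm (swapCol a a' b) = Equiv.swap (a, b) (a', b) := by
  ext ⟨x, y⟩
  · by_cases hy : y = b
    · subst hy
      by_cases hx : x = a
      · simp [swapCol, hx, Equiv.swap_apply_def, Prod.ext_iff]
      · by_cases hx' : x = a' <;>
          simp [swapCol, hx, hx', Equiv.swap_apply_def, Prod.ext_iff]
    · simp [swapCol, hy, Equiv.swap_apply_def, Prod.ext_iff]
  · by_cases hy : y = b
    · subst hy
      by_cases hx : x = a
      · simp [swapCol, hx, Equiv.swap_apply_def, Prod.ext_iff]
      · by_cases hx' : x = a' <;>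
          simp [swapCol, hx, hx', Equiv.swap_apply_def, Prod.ext_iff]
    · simp [swapCol, hy, Equiv.swap_apply_def, Prod.ext_iff]

lemma sgnC_swapCol {a a' : Fin i} (hne : a ≠ a') (b : Fin m) :
    sgnC (swapCol a a' b) = -1 := by
  unfold sgnC swapCol
  have : ∀ b' : Fin m, Equiv.Perm.sign (if b' = b then Equiv.swap a a' else 1)
      = if b' = b then (-1 : ℤˣ) else 1 := by
    intro b'
    by_cases h : b' = b <;> simp [h, Equiv.Perm.sign_swap hne]
  rw [Finset.prod_congr rfl fun b' _ => this b', Finset.prod_ite_eq' Finset.univ b (fun _ => (-1:ℤˣ))]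
  simp

/-- a transposition of two letters within the same block lies in the wreath subgroup -/
lemma swap_same_block_mem {u v : Fin i × Fin m} (h1 : u.1 = v.1) (hne : u ≠ v) :
    InWreath (Equiv.swap u v) := by
  have h2 : u.2 ≠ v.2 := by
    intro h2; exact hne (Prod.ext h1 h2)
  refine ⟨1, fun r => if r = u.1 then Equiv.swap u.2 v.2 else 1, fun ab => ?_⟩
  by_cases hu : ab = u
  · subst hu
    rw [Equiv.swap_apply_left]
    simp only [if_pos rfl]
    exact Prod.ext h1.symm (Equiv.swap_apply_left _ _).symm
  · by_cases hv : ab = v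
    · subst hv
      rw [Equiv.swap_apply_right]
      rw [← h1]
      simp only [if_pos rfl]
      exact Prod.ext rfl (Equiv.swap_apply_right _ _).symm
    · rw [Equiv.swap_apply_of_ne_of_ne hu hv]
      by_cases hr : ab.1 = u.1
      · have hu2 : ab.2 ≠ u.2 := fun h => hu (Prod.ext hr h)
        have hv2 : ab.2 ≠ v.2 := fun h => hv (Prod.ext (hr.trans h1) h)
        have hx : (if ab.1 = u.1 then Equiv.swap u.2 v.2 else 1) ab.2 = ab.2 := by
          rw [if_pos hr]; exact Equiv.swap_apply_of_ne_of_ne hu2 hv2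
        exact Prod.ext rfl hx.symm
      · simp [hr]

end Swap

section Key

variable {i m : ℕ}

open MonoidAlgebra

/-- Key lemma: `e_H · g · S(B_o)` is proportional to `e_H · S(B_o)`. -/
lemma key_prop (g : Equiv.Perm (Fin i × Fin m)) :
    ∃ c : ℂ, eH i m * MonoidAlgebra.of ℂ (Equiv.Perm (Fin i × Fin m)) g * youngSym i m
      = c • (eH i m * youngSym i m) := by
  by_cases hA : ∃ (b : Fin m) (a a' : Fin i), a ≠ a' ∧ (g (a, b)).1 = (g (a', b)).1
  · -- degenerate case: the product is zero
    obtain ⟨b, a, a', hne, heq⟩ := hA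
    set E := eH i m * MonoidAlgebra.of ℂ (Equiv.Perm (Fin i × Fin m)) g * youngSym i m with hE
    have huv : g (a, b) ≠ g (a', b) := fun h => hne (congrArg Prod.fst (g.injective h))
    have hτ : InWreath (Equiv.swap (g (a, b)) (g (a', b))) := swap_same_block_mem heq huv
    have hrel : Equiv.swap (g (a, b)) (g (a', b)) * g = g * colPerm (swapCol a a' b) := by
      rw [colPerm_swapCol, Equiv.swap_apply_apply]
      group
    have hEneg : E = -E := by
      conv_lhs => rw [hE, ← eH_mul_of hτ, mul_assoc (eH i m), ← map_mul, hrel, map_mul,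
        ← mul_assoc (eH i m), mul_assoc _ _ (youngSym i m), colPerm_mul_youngSym,
        sgnC_swapCol hne]
      rw [hE]
      simp [mul_smul_comm]
    have hE0 : E = 0 := by
      have h2 : (2 : ℂ) • E = 0 := by
        rw [two_smul]
        nth_rewrite 1 [hEneg]
        simp
      have := smul_eq_zero.mp h2
      simpa using this
    exact ⟨0, by rw [hE0, zero_smul]⟩
  · -- nondegenerate case: `g` lies in `H · Col`
    push_neg at hA
    have hinj : ∀ b : Fin m, Function.Injective fun a => (g (a, b)).1 := by
      intro b a a' h
      by_contra hne
      exact hA b a a' hne h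
    have hbij : ∀ b : Fin m, Function.Bijective fun a => (g (a, b)).1 :=
      fun b => Finite.injective_iff_bijective.mp (hinj b)
    set μ : Fin m → Equiv.Perm (Fin i) := fun b => Equiv.ofBijective _ (hbij b) with hμ
    have hμ_apply : ∀ a b, μ b a = (g (a, b)).1 := fun a b => rfl
    set h := g * (colPerm μ)⁻¹ with hh
    have hcinv : ∀ a b, (colPerm μ)⁻¹ (a, b) = ((μ b)⁻¹ a, b) := by
      intro a b
      rw [Equiv.Perm.inv_eq_iff_eq]
      simp
    have hfst : ∀ a b, (h (a, b)).1 = a := by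
      intro a b
      rw [hh, Equiv.Perm.mul_apply, hcinv, ← hμ_apply ((μ b)⁻¹ a) b]
      simp
    have hinj2 : ∀ a : Fin i, Function.Injective fun b => (h (a, b)).2 := by
      intro a b b' hbb
      have : h (a, b) = h (a, b') := Prod.ext ((hfst a b).trans (hfst a b').symm) hbb
      exact (Prod.ext_iff.mp (h.injective this)).2
    have hbij2 : ∀ a, Function.Bijective fun b => (h (a, b)).2 :=
      fun a => Finite.injective_iff_bijective.mp (hinj2 a)
    have hhw : InWreath h := by
      refine ⟨1, fun a => Equiv.ofBijective _ (hbij2 a), fun ab => ?_⟩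
      exact Prod.ext (hfst ab.1 ab.2) rfl
    have hg : g = h * colPerm μ := by rw [hh]; group
    refine ⟨sgnC μ, ?_⟩
    rw [hg, map_mul, ← mul_assoc, eH_mul_of hhw, mul_assoc, colPerm_mul_youngSym,
      mul_smul_comm]

end Key

section Nonzero

variable {i m : ℕ}

lemma sum_subtype_ite (w : Equiv.Perm (Fin i × Fin m)) (c : ℂ)
    [Decidable (InWreath w)] [DecidableEq (Equiv.Perm (Fin i × Fin m))] :
    ∑ h : wreathGrp i m, (if (h : Equiv.Perm (Fin i × Fin m)) = w then c else 0)
      = if InWreath w then c else 0 := by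
  by_cases hw : InWreath w
  · rw [if_pos hw, Fintype.sum_eq_single (⟨w, hw⟩ : wreathGrp i m)]
    · rw [if_pos rfl]
    · intro h hne
      rw [if_neg]
      intro hcoe
      exact hne (Subtype.ext hcoe)
  · rw [if_neg hw]
    refine Finset.sum_eq_zero fun h _ => ?_
    rw [if_neg]
    intro hcoe
    exact hw (hcoe ▸ h.2)

lemma colRow_mem_iff (μ : Fin m → Equiv.Perm (Fin i)) (ρ : Fin i → Equiv.Perm (Fin m)) :
    InWreath (colPerm μ * rowPerm ρ) ↔ ∃ π, μ = fun _ => π := by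
  constructor
  · rintro ⟨π, ρ', hw⟩
    refine ⟨π, funext fun b' => Equiv.ext fun a => ?_⟩
    have h := hw (a, (ρ a)⁻¹ b')
    simp [Equiv.Perm.mul_apply, Prod.ext_iff] at h
    exact h.1
  · rintro ⟨π, rfl⟩
    exact ⟨π, ρ, fun ab => by simp [Equiv.Perm.mul_apply]⟩

lemma sgnC_const (heven : Even m) (π : Equiv.Perm (Fin i)) :
    sgnC (m := m) (fun _ => π) = 1 := by
  unfold sgnC
  rw [Finset.prod_const, Finset.card_univ, Fintype.card_fin]
  rcases Int.units_eq_one_or (Equiv.Perm.sign π) with h | h <;> rw [h]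
  · simp
  · rw [heven.neg_one_pow]
    simp

lemma eH_mul_youngSym_ne_zero (hm : 0 < m) (heven : Even m) :
    eH i m * youngSym i m ≠ 0 := by
  classical
  set G := Equiv.Perm (Fin i × Fin m)
  have expand : eH i m * youngSym i m
      = ∑ h : wreathGrp i m, ∑ μ : Fin m → Equiv.Perm (Fin i),
          ∑ ρ : Fin i → Equiv.Perm (Fin m),
        sgnC μ • MonoidAlgebra.of ℂ G ((h : G) * (colPerm μ * rowPerm ρ)) := by
    rw [eH, youngSym_eq, Finset.sum_mul]
    refine Finset.sum_congr rfl fun h _ => ?_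
    rw [Finset.mul_sum]
    refine Finset.sum_congr rfl fun μ _ => ?_
    rw [Finset.mul_sum]
    refine Finset.sum_congr rfl fun ρ _ => ?_
    rw [mul_smul_comm, ← map_mul]
  intro hzero
  have hev : ((Finsupp.lapply (R := ℂ) (M := ℂ) (1 : G)).comp
      (MonoidAlgebra.coeffLinearEquiv ℂ).toLinearMap)
      (eH i m * youngSym i m) = 0 := by rw [hzero]; simp
  rw [expand] at hev
  rw [map_sum] at hev
  simp only [map_sum, map_smul] at hev
  have hev2 : ∀ (h : wreathGrp i m) (μ : Fin m → Equiv.Perm (Fin i))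
      (ρ : Fin i → Equiv.Perm (Fin m)),
      sgnC μ • ((Finsupp.lapply (R := ℂ) (M := ℂ) (1 : G)).comp
          (MonoidAlgebra.coeffLinearEquiv ℂ).toLinearMap)
          (MonoidAlgebra.of ℂ G ((h : G) * (colPerm μ * rowPerm ρ)))
        = if (h : G) = (colPerm μ * rowPerm ρ)⁻¹ then sgnC μ else 0 := by
    intro h μ ρ
    rw [MonoidAlgebra.of_apply, LinearMap.comp_apply, Finsupp.lapply_apply]
    change sgnC μ • (Finsupp.single _ (1 : ℂ)) (1 : G) = _
    rw [Finsupp.single_apply]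
    simp only [mul_eq_one_iff_eq_inv]
    split_ifs <;> simp
  simp only [hev2] at hev
  rw [Finset.sum_comm] at hev
  have hev3 : ∀ μ : Fin m → Equiv.Perm (Fin i),
      (∑ h : wreathGrp i m, ∑ ρ : Fin i → Equiv.Perm (Fin m),
        if (h : G) = (colPerm μ * rowPerm ρ)⁻¹ then sgnC μ else 0)
      = ∑ ρ : Fin i → Equiv.Perm (Fin m), if (∃ π, μ = fun _ => π) then sgnC μ else 0 := by
    intro μ
    rw [Finset.sum_comm]
    refine Finset.sum_congr rfl fun ρ _ => ?_
    rw [sum_subtype_ite]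
    congr 1
    rw [eq_iff_iff]
    rw [show InWreath (colPerm μ * rowPerm ρ)⁻¹ ↔ (colPerm μ * rowPerm ρ)⁻¹ ∈ wreathGrp i m
      from Iff.rfl, inv_mem_iff, mem_wreathGrp]
    exact colRow_mem_iff μ ρ
  simp only [hev3] at hev
  rw [show (∑ μ : Fin m → Equiv.Perm (Fin i), ∑ ρ : Fin i → Equiv.Perm (Fin m),
      if (∃ π, μ = fun _ => π) then sgnC μ else 0)
    = ∑ μ : Fin m → Equiv.Perm (Fin i),
        (Fintype.card (Fin i → Equiv.Perm (Fin m)) : ℂ) *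
          (if (∃ π, μ = fun _ => π) then sgnC μ else 0) from
    Finset.sum_congr rfl fun μ _ => by rw [Finset.sum_const, Finset.card_univ, nsmul_eq_mul]]
    at hev
  rw [← Finset.mul_sum] at hev
  have hconst : (∑ μ : Fin m → Equiv.Perm (Fin i),
      if (∃ π, μ = fun _ => π) then sgnC μ else 0)
      = (Fintype.card (Equiv.Perm (Fin i)) : ℂ) := by
    have hinj : Function.Injective (fun π : Equiv.Perm (Fin i) => (fun _ => π : Fin m → Equiv.Perm (Fin i))) := by
      intro π π' hp
      exact congrFun hp ⟨0, hm⟩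
    rw [← Fintype.sum_of_injective _ hinj
      (fun π => (1 : ℂ))
      (fun μ => if (∃ π, μ = fun _ => π) then sgnC μ else 0)
      ?_ ?_]
    · rw [Finset.sum_const, Finset.card_univ, nsmul_eq_mul, mul_one]
    · intro μ hμ
      have hno : ¬ ∃ π, μ = fun _ => π := by
        rintro ⟨π, rfl⟩
        exact hμ ⟨π, rfl⟩
      simp only [hno, if_false]
    · intro π
      have hc : ∃ π' : Equiv.Perm (Fin i),
          (fun _ => π : Fin m → Equiv.Perm (Fin i)) = fun _ => π' := ⟨π, rfl⟩
      simp only [if_pos hc, sgnC_const heven]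
  rw [hconst] at hev
  have h1 : (Fintype.card (Fin i → Equiv.Perm (Fin m)) : ℂ) ≠ 0 := by
    exact_mod_cast Fintype.card_ne_zero
  have h2 : (Fintype.card (Equiv.Perm (Fin i)) : ℂ) ≠ 0 := by
    exact_mod_cast Fintype.card_ne_zero
  exact (mul_ne_zero h1 h2) hev

end Nonzero

/-- For the rectangular partition `mδ_i` (with `m` even), the space `[W_{mδ_i}]^H` of
`H`-invariants in the irreducible `S_{mi}`-module `W_{mδ_i}` — realized as the left ideal
generated by the Young symmetrizer, with `H` acting by left multiplication — is
one-dimensional. -/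
theorem wreath_invariants_one_dimensional (i m : ℕ)
    (hm : 0 < m) (heven : Even m) (hi1 : 1 ≤ i) :
    ∃ x₀ : MonoidAlgebra ℂ (Equiv.Perm (Fin i × Fin m)),
      x₀ ∈ rectSpecht i m ∧ x₀ ≠ 0 ∧
      {x | x ∈ rectSpecht i m ∧ ∀ h : Equiv.Perm (Fin i × Fin m), InWreath h →
          MonoidAlgebra.of ℂ (Equiv.Perm (Fin i × Fin m)) h * x = x}
        = {x | ∃ c : ℂ, x = c • x₀} := by
  classical
  set G := Equiv.Perm (Fin i × Fin m)
  set x₀ := eH i m * youngSym i m with hx₀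
  have hx₀mem : x₀ ∈ rectSpecht i m := by
    rw [hx₀, eH, Finset.sum_mul]
    refine Submodule.sum_mem _ fun h _ => ?_
    exact Submodule.subset_span ⟨(h : G), rfl⟩
  have hx₀ne : x₀ ≠ 0 := eH_mul_youngSym_ne_zero hm heven
  have hn : (Fintype.card (wreathGrp i m) : ℂ) ≠ 0 := by
    exact_mod_cast Fintype.card_ne_zero
  refine ⟨x₀, hx₀mem, hx₀ne, ?_⟩
  ext x
  simp only [Set.mem_setOf_eq]
  constructor
  · rintro ⟨hxmem, hxinv⟩
    -- averaging: e_H · x = |H| · x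
    have havg : eH i m * x = (Fintype.card (wreathGrp i m) : ℂ) • x := by
      rw [eH, Finset.sum_mul]
      rw [Finset.sum_congr rfl fun (h : wreathGrp i m) _ => hxinv (h : G) h.prop]
      rw [Finset.sum_const, Finset.card_univ, ← Nat.cast_smul_eq_nsmul ℂ]
    -- e_H · x is proportional to x₀
    have hprop : ∃ c : ℂ, eH i m * x = c • x₀ := by
      refine Submodule.span_induction ?_ ?_ ?_ ?_ hxmem
      · rintro y ⟨g, rfl⟩
        obtain ⟨c, hc⟩ := key_prop (i := i) (m := m) g
        exact ⟨c, by rw [← mul_assoc]; exact hc⟩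
      · exact ⟨0, by simp⟩
      · rintro y z _ _ ⟨c, hc⟩ ⟨c', hc'⟩
        exact ⟨c + c', by rw [mul_add, hc, hc', add_smul]⟩
      · rintro r y _ ⟨c, hc⟩
        exact ⟨r * c, by rw [mul_smul_comm, hc, smul_smul]⟩
    obtain ⟨c, hc⟩ := hprop
    refine ⟨(Fintype.card (wreathGrp i m) : ℂ)⁻¹ * c, ?_⟩
    rw [havg] at hc
    rw [mul_smul, ← hc, inv_smul_smul₀ hn]
  · rintro ⟨c, rfl⟩
    refine ⟨Submodule.smul_mem _ _ hx₀mem, fun h hh => ?_⟩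
    rw [mul_smul_comm, hx₀, ← mul_assoc, of_mul_eH hh]
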